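/- Under the stated assumptions (with Δt playing no role here), let T > 0 and let ρ : [0,T] → ∏_{j=1}^M [0,R_j] be a differentiable curve solving the lane-exchange ODE system ρ_j′(t) = (1/τ)·g_j(ρ(t)) for all j = 1,…,M and t ∈ [0,T]. Then the total source strength t ↦ ∑_{j=1}^M |g_j(ρ(t))| is nonincreasing on [0,T]: for all 0 ≤ s ≤ t ≤ T, ∑_{j=1}^M |g_j(ρ(t))| ≤ ∑_{j=1}^M |g_j(ρ(s))|. (Continuous-time analogue of the telescoping source estimate of Lemma 2.5, underlying the relaxation analysis of Theorem 3.4.) -/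

import Mathlib

open Set Filter Topology

/-- Chain rule for a `C¹` function of two variables along two differentiable curves,
expressed with partial derivatives. -/
lemma chain2_aux {f : ℝ → ℝ → ℝ} (hf : ContDiff ℝ 1 (Function.uncurry f))
    {u v : ℝ → ℝ} {u' v' x : ℝ} (hu : HasDerivAt u u' x) (hv : HasDerivAt v v' x) :
    HasDerivAt (fun t => f (u t) (v t))
      (deriv (fun a => f a (v x)) (u x) * u' + deriv (fun b => f (u x) b) (v x) * v') x := by
  set L := fderiv ℝ (Function.uncurry f) (u x, v x) with hLdef
  have hL : HasFDerivAt (Function.uncurry f) L (u x, v x) :=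
    (hf.differentiable one_ne_zero (u x, v x)).hasFDerivAt
  have h1 : HasDerivAt (fun a => f a (v x)) (L (1, 0)) (u x) := by
    have hp : HasDerivAt (fun a : ℝ => (a, v x)) ((1:ℝ), (0:ℝ)) (u x) :=
      (hasDerivAt_id _).prodMk (hasDerivAt_const _ _)
    exact hL.comp_hasDerivAt (u x) hp
  have h2 : HasDerivAt (fun b => f (u x) b) (L (0, 1)) (v x) := by
    have hp : HasDerivAt (fun b : ℝ => (u x, b)) ((0:ℝ), (1:ℝ)) (v x) :=
      (hasDerivAt_const _ _).prodMk (hasDerivAt_id _)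
    exact hL.comp_hasDerivAt (v x) hp
  have h3 : HasDerivAt (fun t => (u t, v t)) ((u', v') : ℝ × ℝ) x := hu.prodMk hv
  have h4 : HasDerivAt (fun t => f (u t) (v t)) (L (u', v')) x := by
    exact hL.comp_hasDerivAt x h3
  rw [h1.deriv, h2.deriv]
  have he : ((u', v') : ℝ × ℝ) = u' • ((1:ℝ), (0:ℝ)) + v' • ((0:ℝ), (1:ℝ)) := by
    simp [Prod.ext_iff]
  rw [show L (u', v') = L (1,0) * u' + L (0,1) * v' by
    rw [he, map_add, map_smul, map_smul]; simp [mul_comm]] at h4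
  exact h4

/-- The telescoping sum inequality underlying the `l¹` contraction of the
lane-exchange relaxation system. -/
lemma sumTele_aux (M : ℕ) (hM : 1 ≤ M) (a b gg ε : ℕ → ℝ)
    (ha : ∀ j ∈ Finset.Icc 1 (M-1), 0 ≤ a j)
    (hb : ∀ j ∈ Finset.Icc 1 (M-1), b j ≤ 0)
    (ha0 : a 0 = 0) (hb0 : b 0 = 0) (haM : a M = 0) (hbM : b M = 0)
    (hε1 : ∀ j, |ε j| ≤ 1)
    (hεg : ∀ j ∈ Finset.Icc 1 M, ε j * gg j = |gg j|) :
    ∑ j ∈ Finset.Icc 1 M,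
      ε j * ((a (j-1) * gg (j-1) + b (j-1) * gg j) - (a j * gg j + b j * gg (j+1))) ≤ 0 := by
  set A : ℕ → ℝ := fun k => a k * gg k + b k * gg (k+1) with hA
  have hA0 : A 0 = 0 := by simp [hA, ha0, hb0]
  have hAM : A M = 0 := by simp [hA, haM, hbM]
  have hsplit : ∑ j ∈ Finset.Icc 1 M,
      ε j * ((a (j-1) * gg (j-1) + b (j-1) * gg j) - (a j * gg j + b j * gg (j+1)))
      = (∑ j ∈ Finset.Icc 1 M, ε j * A (j-1)) - ∑ j ∈ Finset.Icc 1 M, ε j * A j := by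
    rw [← Finset.sum_sub_distrib]
    apply Finset.sum_congr rfl
    intro j hj
    have hj1 : 1 ≤ j := (Finset.mem_Icc.mp hj).1
    have e : j - 1 + 1 = j := Nat.succ_pred_eq_of_pos hj1
    simp [hA, e, mul_sub]
  have h1 : (∑ j ∈ Finset.Icc 1 M, ε j * A (j-1))
      = ∑ k ∈ Finset.Icc 0 (M-1), ε (k+1) * A k := by
    apply Finset.sum_nbij' (fun j => j - 1) (fun k => k + 1)
    · intro j hj; simp only [Finset.mem_Icc] at *; omega
    · intro k hk; simp only [Finset.mem_Icc] at *; omega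
    · intro j hj; simp only [Finset.mem_Icc] at hj; omega
    · intro k hk; rfl
    · intro j hj
      simp only [Finset.mem_Icc] at hj
      have : j - 1 + 1 = j := by omega
      rw [this]
  have hins : Finset.Icc 0 (M-1) = insert 0 (Finset.Icc 1 (M-1)) := by
    ext k; simp [Finset.mem_Icc]; omega
  have h1' : (∑ k ∈ Finset.Icc 0 (M-1), ε (k+1) * A k)
      = ∑ k ∈ Finset.Icc 1 (M-1), ε (k+1) * A k := by
    rw [hins, Finset.sum_insert (by simp)]
    simp [hA0]
  have h2 : (∑ j ∈ Finset.Icc 1 M, ε j * A j)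
      = ∑ j ∈ Finset.Icc 1 (M-1), ε j * A j := by
    have hMe : M = (M - 1) + 1 := by omega
    rw [hMe, Finset.sum_Icc_succ_top (by omega)]
    rw [← hMe, hAM]; ring
  rw [hsplit, h1, h1', h2, ← Finset.sum_sub_distrib]
  apply Finset.sum_nonpos
  intro k hk
  simp only [Finset.mem_Icc] at hk
  have hak := ha k (by simp [Finset.mem_Icc]; omega)
  have hbk := hb k (by simp [Finset.mem_Icc]; omega)
  have hg1 := hεg k (by simp [Finset.mem_Icc]; omega)
  have hg2 := hεg (k+1) (by simp [Finset.mem_Icc]; omega)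
  have h3 : ε (k+1) * gg k ≤ |gg k| := by
    calc ε (k+1) * gg k ≤ |ε (k+1) * gg k| := le_abs_self _
    _ = |ε (k+1)| * |gg k| := abs_mul _ _
    _ ≤ 1 * |gg k| := mul_le_mul_of_nonneg_right (hε1 _) (abs_nonneg _)
    _ = |gg k| := one_mul _
  have h4 : ε k * gg (k+1) ≤ |gg (k+1)| := by
    calc ε k * gg (k+1) ≤ |ε k * gg (k+1)| := le_abs_self _
    _ = |ε k| * |gg (k+1)| := abs_mul _ _
    _ ≤ 1 * |gg (k+1)| := mul_le_mul_of_nonneg_right (hε1 _) (abs_nonneg _)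
    _ = |gg (k+1)| := one_mul _
  have t1 : a k * (ε (k+1) * gg k - ε k * gg k) ≤ 0 :=
    mul_nonpos_of_nonneg_of_nonpos hak (by rw [hg1]; linarith)
  have t2 : b k * (ε (k+1) * gg (k+1) - ε k * gg (k+1)) ≤ 0 :=
    mul_nonpos_of_nonpos_of_nonneg hbk (by rw [hg2]; linarith)
  have hexp : ε (k+1) * A k - ε k * A k
      = a k * (ε (k+1) * gg k - ε k * gg k)
        + b k * (ε (k+1) * gg (k+1) - ε k * gg (k+1)) := by
    simp only [hA]; ring
  linarith

/-- Continuous-time analogue of the telescoping source estimate of Lemma 2.5: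
along the lane-exchange relaxation ODE, the total source strength
t ↦ ∑_j |g_j(ρ(t))| is nonincreasing. -/
theorem ode_source_strength_nonincreasing
    (M : ℕ) (hM : 1 ≤ M)
    (R : ℕ → ℝ) (hR : ∀ j, 1 ≤ j → j ≤ M → 0 < R j)
    (𝒮 τ : ℝ) (h𝒮 : 0 < 𝒮) (hτ : 0 < τ)
    (S : ℕ → ℝ → ℝ → ℝ)
    (hS0 : ∀ u w, S 0 u w = 0)
    (hSM : ∀ u w, S M u w = 0)
    (hSC1 : ∀ j, 1 ≤ j → j ≤ M - 1 → ContDiff ℝ 1 (Function.uncurry (S j)))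
    (hS1 : ∀ j, 1 ≤ j → j ≤ M - 1 → ∀ u ∈ Icc (0:ℝ) (R j), ∀ w ∈ Icc (0:ℝ) (R (j+1)),
      deriv (fun u' => S j u' w) u ∈ Icc (0:ℝ) 𝒮)
    (hS2 : ∀ j, 1 ≤ j → j ≤ M - 1 → ∀ u ∈ Icc (0:ℝ) (R j), ∀ w ∈ Icc (0:ℝ) (R (j+1)),
      deriv (fun w' => S j u w') w ∈ Icc (-𝒮) (0:ℝ))
    (hS00 : ∀ j, 1 ≤ j → j ≤ M - 1 → S j 0 0 = 0)
    (hSRR : ∀ j, 1 ≤ j → j ≤ M - 1 → S j (R j) (R (j+1)) = 0)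
    (g : (ℕ → ℝ) → ℕ → ℝ)
    (hg : ∀ ρ j, g ρ j = S (j-1) (ρ (j-1)) (ρ j) - S j (ρ j) (ρ (j+1)))
    (Tmax : ℝ) (hT : 0 < Tmax)
    (ρ : ℝ → ℕ → ℝ)
    (hbox : ∀ t ∈ Icc (0:ℝ) Tmax, ∀ j, 1 ≤ j → j ≤ M → ρ t j ∈ Icc (0:ℝ) (R j))
    (hode : ∀ t ∈ Icc (0:ℝ) Tmax, ∀ j, 1 ≤ j → j ≤ M →
      HasDerivAt (fun s => ρ s j) ((1 / τ) * g (ρ t) j) t) :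
    ∀ s ∈ Icc (0:ℝ) Tmax, ∀ t ∈ Icc (0:ℝ) Tmax, s ≤ t →
      ∑ j ∈ Finset.Icc 1 M, |g (ρ t) j| ≤ ∑ j ∈ Finset.Icc 1 M, |g (ρ s) j| := by
  -- partial derivatives of the exchange rates along the trajectory
  set aa : ℝ → ℕ → ℝ := fun x j => deriv (fun u => S j u (ρ x (j+1))) (ρ x j) with haa
  set bb : ℝ → ℕ → ℝ := fun x j => deriv (fun w => S j (ρ x j) w) (ρ x (j+1)) with hbb
  set A : ℝ → ℕ → ℝ := fun x j => aa x j * g (ρ x) j + bb x j * g (ρ x) (j+1) with hA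
  have haa0 : ∀ x, aa x 0 = 0 := by
    intro x
    have : (fun u => S 0 u (ρ x 1)) = fun _ => (0:ℝ) := funext fun u => hS0 u _
    simp [haa, this]
  have hbb0 : ∀ x, bb x 0 = 0 := by
    intro x
    have : (fun w => S 0 (ρ x 0) w) = fun _ => (0:ℝ) := funext fun w => hS0 _ w
    simp [hbb, this]
  have haaM : ∀ x, aa x M = 0 := by
    intro x
    have : (fun u => S M u (ρ x (M+1))) = fun _ => (0:ℝ) := funext fun u => hSM u _
    simp [haa, this]
  have hbbM : ∀ x, bb x M = 0 := by
    intro x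
    have : (fun w => S M (ρ x M) w) = fun _ => (0:ℝ) := funext fun w => hSM _ w
    simp [hbb, this]
  -- derivative of each exchange term
  have D1 : ∀ x ∈ Icc (0:ℝ) Tmax, ∀ j, j ≤ M →
      HasDerivAt (fun z => S j (ρ z j) (ρ z (j+1))) ((1/τ) * A x j) x := by
    intro x hx j hjM
    rcases eq_or_ne j 0 with h0 | h0
    · subst h0
      have hf : (fun z => S 0 (ρ z 0) (ρ z 1)) = fun _ => (0:ℝ) := funext fun z => hS0 _ _
      rw [hf, show (1/τ) * A x 0 = 0 by simp [hA, haa0 x, hbb0 x]]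
      exact hasDerivAt_const _ _
    rcases eq_or_ne j M with hMj | hMj
    · subst hMj
      have hf : (fun z => S j (ρ z j) (ρ z (j+1))) = fun _ => (0:ℝ) := funext fun z => hSM _ _
      rw [hf, show (1/τ) * A x j = 0 by simp [hA, haaM x, hbbM x]]
      exact hasDerivAt_const _ _
    · have hj1 : 1 ≤ j := Nat.one_le_iff_ne_zero.mpr h0
      have hjM1 : j ≤ M - 1 := by omega
      have hu := hode x hx j hj1 (by omega)
      have hv := hode x hx (j+1) (by omega) (by omega)
      have hch := chain2_aux (hSC1 j hj1 hjM1) hu hv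
      convert hch using 1
      simp only [hA, haa, hbb]
      ring
  -- derivative of each source term
  have D2 : ∀ x ∈ Icc (0:ℝ) Tmax, ∀ j, 1 ≤ j → j ≤ M →
      HasDerivAt (fun z => g (ρ z) j) ((1/τ) * (A x (j-1) - A x j)) x := by
    intro x hx j hj1 hjM
    have e : j - 1 + 1 = j := Nat.succ_pred_eq_of_pos hj1
    have h1 := D1 x hx (j-1) (by omega)
    rw [e] at h1
    have h2 := D1 x hx j hjM
    have hsub : HasDerivAt (fun z => S (j-1) (ρ z (j-1)) (ρ z j) - S j (ρ z j) (ρ z (j+1))) _ x := h1.sub h2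
    have hfe : (fun z => S (j-1) (ρ z (j-1)) (ρ z j) - S j (ρ z j) (ρ z (j+1)))
        = fun z => g (ρ z) j := funext fun z => (hg (ρ z) j).symm
    rw [hfe] at hsub
    convert hsub using 1
    ring
  -- sign information
  have hsign : ∀ x ∈ Icc (0:ℝ) Tmax, ∀ j ∈ Finset.Icc 1 (M-1), 0 ≤ aa x j ∧ bb x j ≤ 0 := by
    intro x hx j hj
    simp only [Finset.mem_Icc] at hj
    have hu := hbox x hx j hj.1 (by omega)
    have hw := hbox x hx (j+1) (by omega) (by omega)
    have h1 := hS1 j hj.1 hj.2 _ hu _ hw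
    have h2 := hS2 j hj.1 hj.2 _ hu _ hw
    exact ⟨h1.1, h2.2⟩
  -- the key Dini-derivative estimate
  have key : ∀ x ∈ Icc (0:ℝ) Tmax, ∃ D : ℝ, D ≤ 0 ∧
      Tendsto (slope (fun z => ∑ j ∈ Finset.Icc 1 M, |g (ρ z) j|) x) (𝓝[>] x) (𝓝 D) := by
    intro x hx
    set G : ℕ → ℝ := fun j => (1/τ) * (A x (j-1) - A x j) with hG
    set ε : ℕ → ℝ := fun j => if 0 < g (ρ x) j then 1 else if g (ρ x) j < 0 then -1
        else if 0 ≤ G j then 1 else -1 with hε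
    have hε1 : ∀ j, |ε j| ≤ 1 := by
      intro j; rw [hε]; dsimp only; split_ifs <;> norm_num
    have hεg : ∀ j ∈ Finset.Icc 1 M, ε j * g (ρ x) j = |g (ρ x) j| := by
      intro j _
      rw [hε]; dsimp only
      split_ifs with h1 h2 h3
      · rw [one_mul, abs_of_pos h1]
      · rw [abs_of_neg h2]; ring
      · have h0 : g (ρ x) j = 0 := le_antisymm (not_lt.mp h1) (not_lt.mp h2)
        simp [h0]
      · have h0 : g (ρ x) j = 0 := le_antisymm (not_lt.mp h1) (not_lt.mp h2)
        simp [h0]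
    refine ⟨∑ j ∈ Finset.Icc 1 M, ε j * G j, ?_, ?_⟩
    · -- the bound via the telescoping lemma
      have hrw : ∑ j ∈ Finset.Icc 1 M, ε j * G j
          = (1/τ) * ∑ j ∈ Finset.Icc 1 M,
              ε j * ((aa x (j-1) * g (ρ x) (j-1) + bb x (j-1) * g (ρ x) j)
                - (aa x j * g (ρ x) j + bb x j * g (ρ x) (j+1))) := by
        rw [Finset.mul_sum]
        apply Finset.sum_congr rfl
        intro j hj
        have hj1 : 1 ≤ j := (Finset.mem_Icc.mp hj).1
        have e : j - 1 + 1 = j := by omega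
        simp only [hG, hA, e]
        ring
      rw [hrw]
      have hsum := sumTele_aux M hM (aa x) (bb x) (g (ρ x)) ε
        (fun j hj => (hsign x hx j hj).1) (fun j hj => (hsign x hx j hj).2)
        (haa0 x) (hbb0 x) (haaM x) (hbbM x) hε1 hεg
      exact mul_nonpos_of_nonneg_of_nonpos (by positivity) hsum
    · -- convergence of right slopes to ∑ εⱼ Gⱼ
      have hmono : 𝓝[>] x ≤ 𝓝[≠] x := nhdsWithin_mono x fun z hz => ne_of_gt hz
      have perj : ∀ j ∈ Finset.Icc 1 M,
          Tendsto (slope (fun y => |g (ρ y) j|) x) (𝓝[>] x) (𝓝 (ε j * G j)) := by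
        intro j hj
        simp only [Finset.mem_Icc] at hj
        have hu : HasDerivAt (fun z => g (ρ z) j) (G j) x := D2 x hx j hj.1 hj.2
        have hsl : Tendsto (slope (fun z => g (ρ z) j) x) (𝓝[≠] x) (𝓝 (G j)) :=
          hasDerivAt_iff_tendsto_slope.mp hu
        rcases lt_trichotomy (g (ρ x) j) 0 with hneg | hzero | hpos
        · have hev : ∀ᶠ z in 𝓝 x, g (ρ z) j < 0 :=
            hu.continuousAt.eventually_lt_const hneg
          have hev' : ∀ᶠ z in 𝓝[>] x,
              slope (fun y => |g (ρ y) j|) x z = - slope (fun z => g (ρ z) j) x z := by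
            filter_upwards [eventually_nhdsWithin_of_eventually_nhds hev] with z hz
            rw [slope_def_field, slope_def_field, abs_of_neg hz, abs_of_neg hneg]
            ring
          have hεj : ε j = -1 := by
            rw [hε]; dsimp only; rw [if_neg (by linarith), if_pos hneg]
          have T : Tendsto (fun z => - slope (fun z => g (ρ z) j) x z) (𝓝[>] x)
              (𝓝 (- G j)) := (hsl.mono_left hmono).neg
          have := T.congr' (Filter.EventuallyEq.symm hev')
          rw [hεj]; simpa using this
        · have hεG : ε j * G j = |G j| := by
            rw [hε]; dsimp only
            rw [if_neg (by simp [hzero]), if_neg (by simp [hzero])]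
            split_ifs with h
            · rw [one_mul, abs_of_nonneg h]
            · rw [abs_of_neg (not_le.mp h)]; ring
          have habs : Tendsto (fun z => |slope (fun z => g (ρ z) j) x z|) (𝓝[≠] x)
              (𝓝 |G j|) := hsl.abs
          have hev' : ∀ᶠ z in 𝓝[>] x,
              slope (fun y => |g (ρ y) j|) x z = |slope (fun z => g (ρ z) j) x z| := by
            filter_upwards [self_mem_nhdsWithin] with z hz
            have hzx : (0:ℝ) < z - x := sub_pos.mpr hz
            rw [slope_def_field, slope_def_field, hzero, abs_div, abs_of_pos hzx]
            simp
          rw [hεG]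
          exact ((habs.mono_left hmono).congr' (Filter.EventuallyEq.symm hev'))
        · have hev : ∀ᶠ z in 𝓝 x, 0 < g (ρ z) j :=
            hu.continuousAt.eventually_const_lt hpos
          have hev' : ∀ᶠ z in 𝓝[>] x,
              slope (fun y => |g (ρ y) j|) x z = slope (fun z => g (ρ z) j) x z := by
            filter_upwards [eventually_nhdsWithin_of_eventually_nhds hev] with z hz
            rw [slope_def_field, slope_def_field, abs_of_pos hz, abs_of_pos hpos]
          have hεj : ε j = 1 := by rw [hε]; dsimp only; rw [if_pos hpos]
          have T := (hsl.mono_left hmono).congr' (Filter.EventuallyEq.symm hev')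
          rw [hεj]; simpa using T
      have hslope_eq : ∀ z, slope (fun z => ∑ j ∈ Finset.Icc 1 M, |g (ρ z) j|) x z
          = ∑ j ∈ Finset.Icc 1 M, slope (fun y => |g (ρ y) j|) x z := by
        intro z
        simp only [slope_def_field]
        rw [← Finset.sum_div, ← Finset.sum_sub_distrib]
      have Tsum : Tendsto (fun z => ∑ j ∈ Finset.Icc 1 M, slope (fun y => |g (ρ y) j|) x z)
          (𝓝[>] x) (𝓝 (∑ j ∈ Finset.Icc 1 M, ε j * G j)) :=
        tendsto_finset_sum _ perj
      exact Tsum.congr fun z => (hslope_eq z).symm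
  -- conclude via the fencing theorem
  intro s hs t ht hst
  have hsub : Icc s t ⊆ Icc (0:ℝ) Tmax := fun z hz =>
    ⟨le_trans hs.1 hz.1, le_trans hz.2 ht.2⟩
  have hcont : ContinuousOn (fun z => ∑ j ∈ Finset.Icc 1 M, |g (ρ z) j|) (Icc s t) := by
    intro z hz
    have hz' := hsub hz
    apply ContinuousAt.continuousWithinAt
    exact tendsto_finset_sum _ fun j hj => by
      simp only [Finset.mem_Icc] at hj
      exact ((D2 z hz' j hj.1 hj.2).continuousAt.abs : ContinuousAt _ z)
  have himg := image_le_of_liminf_slope_right_le_deriv_boundary (a := s) (b := t)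
    (B := fun _ => ∑ j ∈ Finset.Icc 1 M, |g (ρ s) j|) (B' := fun _ => 0)
    hcont le_rfl continuousOn_const
    (fun x _ => hasDerivWithinAt_const _ _ _)
    (by
      intro x hx r hr
      obtain ⟨D, hD0, hDt⟩ := key x ⟨le_trans hs.1 hx.1, le_of_lt (lt_of_lt_of_le hx.2 ht.2)⟩
      exact (hDt.eventually_lt_const (lt_of_le_of_lt hD0 hr)).frequently)
  exact himg (right_mem_Icc.mpr hst)
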